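/- arXiv:2502.18350 — 5 statements merged into one kernel-verified Lean document; each statement's English description precedes it below -/
import Mathlib

section
/- For an edge (u,v) in a connected unweighted graph G, the effective resistance res(u,v) equals 1 if and only if (u,v) is a cut edge (i.e., removing it disconnects G). -/
open Matrix

/-- `B` is the Moore–Penrose pseudoinverse of `A`. -/
def IsMoorePenrose {V : Type*} [Fintype V] [DecidableEq V] (A B : Matrix V V ℝ) : Prop :=
  A * B * A = A ∧ B * A * B = B ∧ (A * B)ᵀ = A * B ∧ (B * A)ᵀ = B * A

/-- Effective resistance between `u` and `v`, given a matrix `M` playing the role of the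
pseudoinverse of the Laplacian: `(1_u - 1_v)ᵀ M (1_u - 1_v)`. -/
noncomputable def effRes {V : Type*} [Fintype V] [DecidableEq V]
    (M : Matrix V V ℝ) (u v : V) : ℝ :=
  (Pi.single u 1 - Pi.single v 1) ⬝ᵥ (M *ᵥ (Pi.single u 1 - Pi.single v 1))

theorem mp_unique {V : Type*} [Fintype V] [DecidableEq V] {A B C : Matrix V V ℝ}
    (hB : IsMoorePenrose A B) (hC : IsMoorePenrose A C) : B = C := by
  obtain ⟨hB1, hB2, hB3, hB4⟩ := hB
  obtain ⟨hC1, hC2, hC3, hC4⟩ := hC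
  have h1 : B = B * A * C := by
    calc B = B * (A * B) := by rw [← Matrix.mul_assoc, hB2]
    _ = B * (A * B)ᵀ := by rw [hB3]
    _ = B * (Bᵀ * Aᵀ) := by rw [Matrix.transpose_mul]
    _ = B * (Bᵀ * (A * C * A)ᵀ) := by rw [hC1]
    _ = B * (Bᵀ * (Aᵀ * (A * C)ᵀ)) := by rw [Matrix.transpose_mul (A * C) A]
    _ = B * ((Bᵀ * Aᵀ) * (A * C)ᵀ) := by rw [Matrix.mul_assoc]
    _ = B * ((A * B)ᵀ * (A * C)ᵀ) := by rw [← Matrix.transpose_mul]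
    _ = B * ((A * B) * (A * C)) := by rw [hB3, hC3]
    _ = (B * A * B) * (A * C) := by simp [Matrix.mul_assoc]
    _ = B * A * C := by rw [hB2, Matrix.mul_assoc]
  have h2 : C = B * A * C := by
    calc C = (C * A) * C := by rw [hC2]
    _ = (C * A)ᵀ * C := by rw [hC4]
    _ = (Aᵀ * Cᵀ) * C := by rw [Matrix.transpose_mul]
    _ = ((A * B * A)ᵀ * Cᵀ) * C := by rw [hB1]
    _ = (((B * A)ᵀ * Aᵀ) * Cᵀ) * C := by simp [Matrix.transpose_mul, Matrix.mul_assoc]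
    _ = ((B * A) * Aᵀ * Cᵀ) * C := by rw [hB4]
    _ = ((B * A) * (C * A)ᵀ) * C := by rw [Matrix.mul_assoc (B*A), ← Matrix.transpose_mul]
    _ = ((B * A) * (C * A)) * C := by rw [hC4]
    _ = B * A * (C * A * C) := by simp [Matrix.mul_assoc]
    _ = B * A * C := by rw [hC2]
  rw [h1, ← h2]

theorem mp_transpose {V : Type*} [Fintype V] [DecidableEq V] {A B : Matrix V V ℝ}
    (hA : Aᵀ = A) (hB : IsMoorePenrose A B) : IsMoorePenrose A Bᵀ := by
  obtain ⟨h1, h2, h3, h4⟩ := hB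
  refine ⟨?_, ?_, ?_, ?_⟩
  · have := congrArg Matrix.transpose h1
    simpa [Matrix.transpose_mul, hA, Matrix.mul_assoc] using this
  · have := congrArg Matrix.transpose h2
    simpa [Matrix.transpose_mul, hA, Matrix.mul_assoc] using this
  · have e3 : A * Bᵀ = B * A := by rw [← h4, Matrix.transpose_mul, hA]
    rw [e3, h4]
  · have e4 : Bᵀ * A = A * B := by rw [← h3, Matrix.transpose_mul, hA]
    rw [e4, h3]

theorem mp_symm {V : Type*} [Fintype V] [DecidableEq V] {A B : Matrix V V ℝ}
    (hA : Aᵀ = A) (hB : IsMoorePenrose A B) : Bᵀ = B :=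
  mp_unique (mp_transpose hA hB) hB

theorem sum_lapMatrix_mulVec {V : Type*} [Fintype V] [DecidableEq V]
    (G : SimpleGraph V) [DecidableRel G.Adj] (w : V → ℝ) :
    ∑ i, (G.lapMatrix ℝ *ᵥ w) i = 0 := by
  have h : ∑ i, (G.lapMatrix ℝ *ᵥ w) i = (fun _ => (1:ℝ)) ⬝ᵥ (G.lapMatrix ℝ *ᵥ w) := by
    simp [dotProduct]
  rw [h, Matrix.dotProduct_mulVec, ← Matrix.mulVec_transpose,
    (G.isSymm_lapMatrix ℝ).eq, G.lapMatrix_mulVec_const_eq_zero]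
  simp

theorem proj_eq_self {V : Type*} [Fintype V] [DecidableEq V]
    (G : SimpleGraph V) [DecidableRel G.Adj] (hconn : G.Connected)
    (Lp : Matrix V V ℝ) (hLp : IsMoorePenrose (G.lapMatrix ℝ) Lp)
    (x : V → ℝ) (hx : ∑ i, x i = 0) :
    G.lapMatrix ℝ *ᵥ (Lp *ᵥ x) = x := by
  set L := G.lapMatrix ℝ with hL
  have hLsymm : Lᵀ = L := (G.isSymm_lapMatrix ℝ).eq
  have hLpsymm : Lpᵀ = Lp := mp_symm hLsymm hLp
  have hcomm : L * Lp = Lp * L := by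
    conv_lhs => rw [← hLp.2.2.1]
    rw [Matrix.transpose_mul, hLsymm, hLpsymm]
  have hLLLp : L * (L * Lp) = L := by
    rw [hcomm, ← Matrix.mul_assoc, hLp.1]
  set z := x - L *ᵥ (Lp *ᵥ x) with hz
  have hzker : L *ᵥ z = 0 := by
    rw [hz, Matrix.mulVec_sub, Matrix.mulVec_mulVec, Matrix.mulVec_mulVec]
    rw [show L * L * Lp = L from by rw [Matrix.mul_assoc]; exact hLLLp]
    simp
  have hzconst : ∀ i j : V, z i = z j := by
    intro i j
    have := (G.lapMatrix_mulVec_eq_zero_iff_forall_reachable (x := z)).mp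
      hzker i j (hconn.preconnected i j)
    exact this
  have hzsum : ∑ i, z i = 0 := by
    rw [hz]
    simp only [Pi.sub_apply, Finset.sum_sub_distrib]
    rw [hx, sum_lapMatrix_mulVec]
    ring
  have hne : Nonempty V := hconn.nonempty
  have hzzero : ∀ i, z i = 0 := by
    intro i
    have h1 : ∑ j : V, z j = (Fintype.card V : ℝ) * z i := by
      rw [Finset.sum_congr rfl (fun j _ => hzconst j i)]
      rw [Finset.sum_const, nsmul_eq_mul]
      rfl
    have hcard : (0:ℝ) < (Fintype.card V : ℝ) := by
      exact_mod_cast Fintype.card_pos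
    have := h1.symm.trans hzsum
    exact (mul_eq_zero.mp this).resolve_left (ne_of_gt hcard)
  have : z = 0 := funext hzzero
  rw [hz] at this
  have := sub_eq_zero.mp this
  exact this.symm

theorem reach_transfer {V : Type*} (G : SimpleGraph V) {u v : V}
    (h : (G.deleteEdges {s(u, v)}).Reachable u v) {a b : V} (p : G.Walk a b) :
    (G.deleteEdges {s(u, v)}).Reachable a b := by
  induction p with
  | nil => exact SimpleGraph.Reachable.refl _
  | cons hadj p ih =>
    rename_i x y z
    refine SimpleGraph.Reachable.trans ?_ ih
    by_cases he : s(x, y) = s(u, v)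
    · rw [Sym2.eq_iff] at he
      rcases he with ⟨rfl, rfl⟩ | ⟨rfl, rfl⟩
      · exact h
      · exact h.symm
    · exact SimpleGraph.Adj.reachable (by simp [SimpleGraph.deleteEdges_adj, hadj, he])

theorem walk_sq_le {V : Type*} {H : SimpleGraph V} (f : V → ℝ) {a b : V} (p : H.Walk a b) :
    (f a - f b)^2 ≤ (p.length : ℝ) * (p.darts.map fun d => (f d.toProd.1 - f d.toProd.2)^2).sum := by
  induction p with
  | nil => simp
  | cons hadj p ih =>
    rename_i x y z
    simp only [SimpleGraph.Walk.length_cons, SimpleGraph.Walk.darts_cons, List.map_cons,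
      List.sum_cons, Nat.cast_add, Nat.cast_one]
    set k : ℝ := (p.length : ℝ)
    set S : ℝ := (p.darts.map fun d => (f d.toProd.1 - f d.toProd.2)^2).sum
    have hk : (0:ℝ) ≤ k := Nat.cast_nonneg _
    have hS : (0:ℝ) ≤ S := by
      apply List.sum_nonneg
      intro r hr
      simp only [List.mem_map] at hr
      obtain ⟨d, _, rfl⟩ := hr
      positivity
    set t : ℝ := f x - f y
    set s : ℝ := f y - f z
    have hfb : f x - f z = t + s := by ring
    rw [hfb]
    rcases eq_or_lt_of_le hk with hk0 | hkpos
    · have : s^2 ≤ 0 := by rw [← hk0, zero_mul] at ih; exact le_trans ih (by linarith)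
      have hs0 : s = 0 := by nlinarith [sq_nonneg s]
      rw [hs0]
      nlinarith [sq_nonneg t]
    · have key : k * (t + s)^2 ≤ k * ((k + 1) * (t^2 + S)) := by
        nlinarith [sq_nonneg (k * t - s), ih, sq_nonneg t, sq_nonneg s]
      have := (mul_le_mul_iff_right₀ hkpos).mp key
      linarith [this]

theorem effRes_of_lap {V : Type*} [Fintype V] [DecidableEq V]
    (G : SimpleGraph V) [DecidableRel G.Adj]
    (Lp : Matrix V V ℝ) (hLp : IsMoorePenrose (G.lapMatrix ℝ) Lp) (u v : V)
    (f : V → ℝ) (hf : G.lapMatrix ℝ *ᵥ f = (Pi.single u 1 - Pi.single v 1)) :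
    effRes Lp u v = f ⬝ᵥ (Pi.single u 1 - Pi.single v 1) := by
  set L := G.lapMatrix ℝ with hL
  have hLsymm : Lᵀ = L := (G.isSymm_lapMatrix ℝ).eq
  set x : V → ℝ := Pi.single u 1 - Pi.single v 1 with hx
  have key : ∀ y : V → ℝ, (L *ᵥ f) ⬝ᵥ y = f ⬝ᵥ (L *ᵥ y) := by
    intro y
    rw [dotProduct_comm, Matrix.dotProduct_mulVec, ← Matrix.mulVec_transpose, hLsymm,
      dotProduct_comm]
  calc effRes Lp u v = x ⬝ᵥ (Lp *ᵥ x) := rfl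
  _ = (L *ᵥ f) ⬝ᵥ ((Lp * L) *ᵥ f) := by rw [hf, ← Matrix.mulVec_mulVec, hf]
  _ = f ⬝ᵥ (L *ᵥ ((Lp * L) *ᵥ f)) := key _
  _ = f ⬝ᵥ ((L * (Lp * L)) *ᵥ f) := by rw [Matrix.mulVec_mulVec]
  _ = f ⬝ᵥ (L *ᵥ f) := by rw [← Matrix.mul_assoc, hLp.1]
  _ = f ⬝ᵥ x := by rw [hf]

theorem dotProduct_single_sub {V : Type*} [Fintype V] [DecidableEq V]
    (f : V → ℝ) (u v : V) :
    f ⬝ᵥ (Pi.single u 1 - Pi.single v 1) = f u - f v := by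
  simp [dotProduct_sub]

open scoped Classical in
theorem lap_indicator {V : Type*} [Fintype V] [DecidableEq V]
    (G : SimpleGraph V) [DecidableRel G.Adj] {u v : V} (huv : G.Adj u v)
    (hnr : ¬ (G.deleteEdges {s(u, v)}).Reachable u v) :
    G.lapMatrix ℝ *ᵥ (fun w => if (G.deleteEdges {s(u, v)}).Reachable u w then (1:ℝ) else 0)
      = Pi.single u 1 - Pi.single v 1 := by
  set H := G.deleteEdges {s(u, v)} with hH
  set g : V → ℝ := fun w => if H.Reachable u w then (1:ℝ) else 0 with hg
  have hne : u ≠ v := huv.ne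
  have hgu : g u = 1 := by simp only [hg]; rw [if_pos (SimpleGraph.Reachable.refl u)]
  have hgv : g v = 0 := by simp [hg, hnr]
  have hadj_eq : ∀ {w z : V}, G.Adj w z → s(w, z) ≠ s(u, v) → g w = g z := by
    intro w z hwz hne'
    have hHadj : H.Adj w z := by
      rw [hH, SimpleGraph.deleteEdges_adj]
      exact ⟨hwz, by simpa using hne'⟩
    have : H.Reachable u w ↔ H.Reachable u z :=
      ⟨fun h => h.trans hHadj.reachable, fun h => h.trans hHadj.symm.reachable⟩
    simp only [hg]
    rw [if_congr this rfl rfl]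
  funext w
  rw [SimpleGraph.lapMatrix_mulVec_apply]
  have hdeg : (G.degree w : ℝ) * g w = ∑ _z ∈ G.neighborFinset w, g w := by
    rw [Finset.sum_const, nsmul_eq_mul]
    rfl
  rw [hdeg, ← Finset.sum_sub_distrib]
  have hsplit : ∀ z ∈ G.neighborFinset w,
      g w - g z = if s(w, z) = s(u, v) then g w - g z else 0 := by
    intro z hz
    rw [SimpleGraph.mem_neighborFinset] at hz
    by_cases he : s(w, z) = s(u, v)
    · rw [if_pos he]
    · rw [if_neg he, hadj_eq hz he, sub_self]
  rw [Finset.sum_congr rfl hsplit]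
  have hrhs : ((Pi.single u 1 - Pi.single v 1 : V → ℝ)) w =
      (if w = u then (1:ℝ) else 0) - (if w = v then (1:ℝ) else 0) := by
    simp [Pi.single_apply, eq_comm]
  rw [hrhs]
  by_cases hwu : w = u
  · have hcond : ∀ z : V, (s(w, z) = s(u, v)) ↔ (z = v) := by
      intro z; rw [hwu]; exact Sym2.congr_right
    rw [Finset.sum_congr rfl (fun z _ => if_congr (hcond z) rfl rfl)]
    rw [Finset.sum_ite_eq' (G.neighborFinset w) v (fun z => g w - g z)]
    rw [if_pos (by rw [SimpleGraph.mem_neighborFinset, hwu]; exact huv)]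
    rw [hwu, hgu, hgv, if_pos rfl, if_neg hne]
  · by_cases hwv : w = v
    · have hcond : ∀ z : V, (s(w, z) = s(u, v)) ↔ (z = u) := by
        intro z
        rw [hwv, Sym2.eq_iff]
        constructor
        · rintro (⟨h1, h2⟩ | ⟨h1, h2⟩)
          · exact absurd h1 (Ne.symm hne)
          · exact h2
        · intro h; exact Or.inr ⟨rfl, h⟩
      rw [Finset.sum_congr rfl (fun z _ => if_congr (hcond z) rfl rfl)]
      rw [Finset.sum_ite_eq' (G.neighborFinset w) u (fun z => g w - g z)]
      rw [if_pos (by rw [SimpleGraph.mem_neighborFinset, hwv]; exact huv.symm)]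
      rw [hwv, hgu, hgv, if_neg (Ne.symm hne), if_pos rfl]
    · rw [Finset.sum_eq_zero, if_neg hwu, if_neg hwv]
      · ring
      · intro z _
        rw [if_neg]
        intro he
        rw [Sym2.eq_iff] at he
        rcases he with ⟨h1, _⟩ | ⟨h1, _⟩
        · exact hwu h1
        · exact hwv h1

/-- For an edge `(u,v)` of a connected unweighted graph `G`, the effective resistance
equals `1` iff `(u,v)` is a cut edge, i.e. removing it disconnects `G`. -/
theorem effRes_eq_one_iff_cutEdge {V : Type*} [Fintype V] [DecidableEq V]
    (G : SimpleGraph V) [DecidableRel G.Adj] (hconn : G.Connected)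
    (Lp : Matrix V V ℝ) (hLp : IsMoorePenrose (G.lapMatrix ℝ) Lp)
    {u v : V} (huv : G.Adj u v) :
    effRes Lp u v = 1 ↔ ¬ (G.deleteEdges {s(u, v)}).Connected := by
  classical
  constructor
  · intro hres hcon
    set L := G.lapMatrix ℝ with hLdef
    set x : V → ℝ := Pi.single u 1 - Pi.single v 1 with hxdef
    set f : V → ℝ := Lp *ᵥ x with hfdef
    have hx0 : ∑ i, x i = 0 := by
      simp [hxdef, Finset.sum_sub_distrib]
    have hLf : L *ᵥ f = x := proj_eq_self G hconn Lp hLp x hx0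
    have hres' : effRes Lp u v = f ⬝ᵥ x := effRes_of_lap G Lp hLp u v f hLf
    have hfuv : f u - f v = 1 := by
      rw [← dotProduct_single_sub f u v, ← hxdef, ← hres', hres]
    have henergy : f ⬝ᵥ (L *ᵥ f) = 1 := by
      rw [hLf, ← hres', hres]
    have hEAll : (∑ i, ∑ j, if G.Adj i j then (f i - f j)^2 else 0) = 2 := by
      have h2 := SimpleGraph.lapMatrix_toLinearMap₂' ℝ G f
      rw [Matrix.toLinearMap₂'_apply'] at h2
      rw [← hLdef, henergy] at h2
      linarith
    obtain ⟨p⟩ := hcon.preconnected u v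
    set w := p.toPath.1 with hwdef
    have hnodup : w.edges.Nodup := p.toPath.2.isTrail.edges_nodup
    have hdnodup : w.darts.Nodup := by
      have hed : w.edges = w.darts.map SimpleGraph.Dart.edge := rfl
      rw [hed] at hnodup
      exact hnodup.of_map _
    set lst : List (V × V) := w.darts.map SimpleGraph.Dart.toProd with hlst
    have hlnodup : lst.Nodup := hdnodup.map SimpleGraph.Dart.toProd_injective
    set S : ℝ := (w.darts.map fun d => (f d.toProd.1 - f d.toProd.2)^2).sum with hS
    have hCS : (f u - f v)^2 ≤ (w.length : ℝ) * S := walk_sq_le f w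
    have hdart_ne : ∀ d ∈ w.darts, d.toProd ≠ (u, v) ∧ d.toProd ≠ (v, u) := by
      intro d _
      have hd := d.adj
      rw [SimpleGraph.deleteEdges_adj] at hd
      constructor
      · intro h
        apply hd.2
        rw [show d.toProd.1 = u from by rw [h], show d.toProd.2 = v from by rw [h]]
        simp
      · intro h
        apply hd.2
        rw [show d.toProd.1 = v from by rw [h], show d.toProd.2 = u from by rw [h]]
        rw [Sym2.eq_swap]
        simp
    have huv_notin : (u, v) ∉ lst.toFinset := by
      rw [List.mem_toFinset, hlst, List.mem_map]
      rintro ⟨d, hd, hd2⟩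
      exact (hdart_ne d hd).1 hd2
    have hvu_notin : (v, u) ∉ lst.toFinset := by
      rw [List.mem_toFinset, hlst, List.mem_map]
      rintro ⟨d, hd, hd2⟩
      exact (hdart_ne d hd).2 hd2
    have huvvu : (u, v) ≠ (v, u) :=
      fun h => huv.ne (congrArg Prod.fst h)
    set h : V × V → ℝ := fun q => if G.Adj q.1 q.2 then (f q.1 - f q.2)^2 else 0 with hh
    set P : Finset (V × V) := insert (u, v) (insert (v, u) lst.toFinset) with hP
    have hsum_univ : (∑ i, ∑ j, if G.Adj i j then (f i - f j)^2 else 0)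
        = ∑ q : V × V, h q := by
      rw [← Finset.sum_product']
      rfl
    have hle : ∑ q ∈ P, h q ≤ ∑ q : V × V, h q := by
      apply Finset.sum_le_sum_of_subset_of_nonneg (Finset.subset_univ P)
      intro q _ _
      rw [hh]
      dsimp only
      split
      · positivity
      · exact le_refl 0
    have hPsum : ∑ q ∈ P, h q = (f u - f v)^2 + ((f v - f u)^2 + S) := by
      rw [hP, Finset.sum_insert (by rw [Finset.mem_insert]; rintro (h | h); exacts [huvvu h, huv_notin h]),
        Finset.sum_insert hvu_notin]
      congr 1
      · rw [hh]; simp [huv]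
      congr 1
      · rw [hh]; simp [huv.symm]
      · have hadjall : ∀ q ∈ lst.toFinset, h q = (f q.1 - f q.2)^2 := by
          intro q hq
          rw [List.mem_toFinset, hlst, List.mem_map] at hq
          obtain ⟨d, _, rfl⟩ := hq
          have hd := d.adj
          rw [SimpleGraph.deleteEdges_adj] at hd
          rw [hh]
          simp [hd.1]
        rw [Finset.sum_congr rfl hadjall, List.sum_toFinset _ hlnodup, hlst, List.map_map, hS]
        rfl
    have hS0 : S ≤ 0 := by
      have := hle
      rw [hPsum, ← hsum_univ, hEAll, hfuv] at this
      have h1 : (f v - f u)^2 = 1 := by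
        rw [show f v - f u = -(f u - f v) from by ring, neg_sq, hfuv]; norm_num
      rw [h1] at this
      norm_num at this
      linarith
    have hlen : (0:ℝ) ≤ (w.length : ℝ) := Nat.cast_nonneg _
    have : (1:ℝ) ≤ 0 := by
      rw [hfuv] at hCS
      norm_num at hCS
      calc (1:ℝ) ≤ (w.length : ℝ) * S := hCS
      _ ≤ 0 := mul_nonpos_of_nonneg_of_nonpos hlen hS0
    linarith
  · intro hnc
    have hnr : ¬ (G.deleteEdges {s(u, v)}).Reachable u v := by
      intro h
      haveI : Nonempty V := hconn.nonempty
      exact hnc ⟨fun a b => (hconn.preconnected a b).elim (fun p => reach_transfer G h p)⟩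
    have hLg := lap_indicator G huv hnr
    rw [effRes_of_lap G Lp hLp u v _ hLg, dotProduct_single_sub]
    rw [if_pos (SimpleGraph.Reachable.refl u), if_neg hnr]
    norm_num
end

section
/- Nash-Williams inequality: let G = (V,E) be a connected unweighted graph and s, t ∈ V. Suppose S_1, ..., S_k ⊆ V satisfy s ∈ S_i, t ∉ S_i for all i, and the edge boundary sets E(S_i, V \ S_i) are pairwise disjoint. Then res(s,t) ≥ Σ_{i=1}^k 1/|E(S_i, V \ S_i)|. -/
open Matrix

open scoped Classical in
/-- The set of edges of `G` with one endpoint in `S` and the other outside `S`. -/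
noncomputable def edgeBoundary {V : Type*} [Fintype V] [DecidableEq V]
    (G : SimpleGraph V) [DecidableRel G.Adj] (S : Finset V) : Finset (Sym2 V) :=
  G.edgeFinset.filter fun e => ∃ a b, e = s(a, b) ∧ a ∈ S ∧ b ∉ S


lemma lap_range {V : Type*} [Fintype V] [DecidableEq V]
    (G : SimpleGraph V) [DecidableRel G.Adj] (hconn : G.Connected) (x : V → ℝ)
    (hx : ∑ v, x v = 0) : ∃ y, G.lapMatrix ℝ *ᵥ y = x := by
  have hne : Nonempty V := hconn.nonempty
  obtain ⟨v₀⟩ := hne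
  set L : (V → ℝ) →ₗ[ℝ] (V → ℝ) := Matrix.toLin' (G.lapMatrix ℝ) with hL
  -- the sum functional
  set f : (V → ℝ) →ₗ[ℝ] ℝ :=
    { toFun := fun z => ∑ v, z v
      map_add' := fun a b => by simp [Finset.sum_add_distrib]
      map_smul' := fun c a => by simp [Finset.mul_sum] } with hf
  have hker : LinearMap.ker L = Submodule.span ℝ {(fun _ => (1:ℝ))} := by
    ext z
    rw [LinearMap.mem_ker, hL]
    rw [Matrix.toLin'_apply, G.lapMatrix_mulVec_eq_zero_iff_forall_reachable]
    constructor
    · intro h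
      have : z = z v₀ • (fun _ => (1:ℝ)) := by
        funext w
        simp [h w v₀ (hconn.preconnected w v₀)]
      rw [this]
      exact Submodule.smul_mem _ _ (Submodule.mem_span_singleton_self _)
    · intro h i j _
      rw [Submodule.mem_span_singleton] at h
      obtain ⟨c, rfl⟩ := h
      simp
  have hone : (fun _ => (1:ℝ)) ≠ (0 : V → ℝ) := by
    intro h
    have := congrFun h v₀
    simp at this
  have hk1 : Module.finrank ℝ (LinearMap.ker L) = 1 := by
    rw [hker]
    exact finrank_span_singleton hone
  have hfsurj : Function.Surjective f := by
    intro r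
    exact ⟨Pi.single v₀ r, by simp [hf]⟩
  have hkf : Module.finrank ℝ (LinearMap.ker f) + 1 = Fintype.card V := by
    have h1 := LinearMap.finrank_range_add_finrank_ker f
    rw [LinearMap.range_eq_top.mpr hfsurj] at h1
    simpa [add_comm] using h1
  have hkL : Module.finrank ℝ (LinearMap.range L) + 1 = Fintype.card V := by
    have h1 := LinearMap.finrank_range_add_finrank_ker L
    rw [hk1] at h1
    simpa using h1
  have hle : LinearMap.range L ≤ LinearMap.ker f := by
    rintro w ⟨y, rfl⟩
    rw [LinearMap.mem_ker]
    show ∑ v, (Matrix.toLin' (G.lapMatrix ℝ) y) v = 0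
    simp only [Matrix.toLin'_apply]
    have : ∑ v, (G.lapMatrix ℝ *ᵥ y) v = ∑ b, (∑ v, G.lapMatrix ℝ v b) * y b := by
      simp only [Matrix.mulVec, dotProduct]
      rw [Finset.sum_comm]
      simp [Finset.sum_mul]
    rw [this]
    have hz : ∀ b, ∑ v, G.lapMatrix ℝ v b = 0 := by
      intro b
      have hsym := G.isSymm_lapMatrix (R := ℝ)
      have : ∑ v, G.lapMatrix ℝ v b = ∑ v, G.lapMatrix ℝ b v := by
        refine Finset.sum_congr rfl fun v _ => ?_
        rw [← hsym.apply v b]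
      rw [this]
      have := congrFun (G.lapMatrix_mulVec_const_eq_zero (R := ℝ)) b
      simpa [Matrix.mulVec, dotProduct] using this
    simp [hz]
  have heq : LinearMap.range L = LinearMap.ker f :=
    Submodule.eq_of_le_of_finrank_le hle (by omega)
  have hxmem : x ∈ LinearMap.ker f := by simp [LinearMap.mem_ker, hf, hx]
  rw [← heq] at hxmem
  obtain ⟨y, hy⟩ := hxmem
  exact ⟨y, by rw [← Matrix.toLin'_apply]; exact hy⟩

/-- Nash-Williams inequality: if `S 1, …, S k` all contain `s` but not `t` and have
pairwise disjoint edge boundaries, then `res(s,t) ≥ Σ_i 1 / |E(S_i, V \ S_i)|`. -/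

theorem nash_williams {V : Type*} [Fintype V] [DecidableEq V]
    (G : SimpleGraph V) [DecidableRel G.Adj] (hconn : G.Connected)
    (Lp : Matrix V V ℝ) (hLp : IsMoorePenrose (G.lapMatrix ℝ) Lp)
    (s t : V) {k : ℕ} (S : Fin k → Finset V)
    (hs : ∀ i, s ∈ S i) (ht : ∀ i, t ∉ S i)
    (hdisj : ∀ i j, i ≠ j → Disjoint (edgeBoundary G (S i)) (edgeBoundary G (S j))) :
    ∑ i, ((edgeBoundary G (S i)).card : ℝ)⁻¹ ≤ effRes Lp s t := by
  classical
  set L := G.lapMatrix ℝ with hLdef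
  set δ : V → ℝ := Pi.single s 1 - Pi.single t 1 with hδ
  have hδsum : ∑ v, δ v = 0 := by
    simp [hδ, Finset.sum_sub_distrib]
  obtain ⟨y, hy⟩ := lap_range G hconn δ hδsum
  set φ : V → ℝ := Lp *ᵥ δ with hφdef
  have hφ : L *ᵥ φ = δ := by
    rw [hφdef, ← hy, Matrix.mulVec_mulVec, Matrix.mulVec_mulVec, hLp.1]
  -- edge energy function
  set f : V → V → ℝ := fun a b => if G.Adj a b then φ a - φ b else 0 with hfdef
  have hf : ∀ a b, f a b = - f b a := by
    intro a b
    by_cases h : G.Adj a b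
    · simp [hfdef, h, h.symm]
    · have h' : ¬ G.Adj b a := fun h' => h h'.symm
      simp [hfdef, h, h']
  have hLrow : ∀ a, (L *ᵥ φ) a = ∑ b, f a b := by
    intro a
    rw [hLdef, SimpleGraph.lapMatrix_mulVec_apply]
    have h1 : (G.degree a : ℝ) * φ a = ∑ _b ∈ G.neighborFinset a, φ a := by
      rw [Finset.sum_const, SimpleGraph.degree, nsmul_eq_mul]
    rw [h1, ← Finset.sum_sub_distrib, SimpleGraph.neighborFinset_eq_filter,
      Finset.sum_filter]
  -- energy identity
  have hres : effRes Lp s t = (∑ a, ∑ b, if G.Adj a b then (φ a - φ b)^2 else 0) / 2 := by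
    have h1 : effRes Lp s t = φ ⬝ᵥ (L *ᵥ φ) := by
      rw [hφ, effRes, ← hδ, ← hφdef, dotProduct_comm]
    rw [h1, ← Matrix.toLinearMap₂'_apply']
    exact G.lapMatrix_toLinearMap₂' ℝ φ
  -- oriented boundaries
  set B : Fin k → Finset (V × V) := fun i =>
    Finset.univ.filter (fun p => G.Adj p.1 p.2 ∧ p.1 ∈ S i ∧ p.2 ∉ S i) with hB
  have hmemB : ∀ i p, p ∈ B i ↔ G.Adj p.1 p.2 ∧ p.1 ∈ S i ∧ p.2 ∉ S i := by
    intro i p; simp [hB]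
  -- card equality
  have hcard : ∀ i, (B i).card = (edgeBoundary G (S i)).card := by
    intro i
    refine Finset.card_bij (fun p _ => s(p.1, p.2)) ?_ ?_ ?_
    · intro p hp
      rw [hmemB] at hp
      simp only [edgeBoundary, Finset.mem_filter, SimpleGraph.mem_edgeFinset,
        SimpleGraph.mem_edgeSet]
      exact ⟨hp.1, p.1, p.2, rfl, hp.2.1, hp.2.2⟩
    · intro p hp q hq hpq
      rw [hmemB] at hp hq
      rw [Sym2.eq_iff] at hpq
      rcases hpq with ⟨h1, h2⟩ | ⟨h1, h2⟩
      · exact Prod.ext h1 h2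
      · exact absurd (h1 ▸ hq.2.2) (fun h => h hp.2.1)
    · intro e he
      simp only [edgeBoundary, Finset.mem_filter, SimpleGraph.mem_edgeFinset,
        SimpleGraph.mem_edgeSet] at he
      obtain ⟨hadj, a, b, rfl, ha, hb⟩ := he
      refine ⟨(a, b), ?_, rfl⟩
      rw [hmemB]
      exact ⟨hadj, ha, hb⟩
  -- flow identity
  have hflow : ∀ i, ∑ p ∈ B i, (φ p.1 - φ p.2) = 1 := by
    intro i
    set χ : V → ℝ := fun a => if a ∈ S i then 1 else 0 with hχ
    have hsf : ∑ p ∈ B i, (φ p.1 - φ p.2)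
        = ∑ a, ∑ b, χ a * (1 - χ b) * f a b := by
      rw [hB, Finset.sum_filter]
      conv_rhs => rw [← Fintype.sum_prod_type']
      refine Finset.sum_congr rfl fun p _ => ?_
      by_cases h1 : G.Adj p.1 p.2 <;> by_cases h2 : p.1 ∈ S i <;>
        by_cases h3 : p.2 ∈ S i <;> simp [hχ, hfdef, h1, h2, h3]
    have hanti : ∑ a, ∑ b, χ a * χ b * f a b = 0 := by
      have hswap : ∑ a, ∑ b, χ a * χ b * f a b
          = - ∑ a, ∑ b, χ a * χ b * f a b := by
        conv_lhs => rw [Finset.sum_comm]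
        rw [← Finset.sum_neg_distrib]
        refine Finset.sum_congr rfl fun a _ => ?_
        rw [← Finset.sum_neg_distrib]
        refine Finset.sum_congr rfl fun b _ => ?_
        rw [hf b a]
        ring
      linarith
    have hmain : ∑ a, ∑ b, χ a * f a b = 1 := by
      have : ∀ a, ∑ b, f a b = δ a := by
        intro a; rw [← hLrow, hφ]
      calc ∑ a, ∑ b, χ a * f a b = ∑ a, χ a * δ a := by
            refine Finset.sum_congr rfl fun a _ => ?_
            rw [← Finset.mul_sum, this]
        _ = 1 := by
            rw [hδ]
            simp only [Pi.sub_apply, mul_sub, Finset.sum_sub_distrib]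
            have e1 : ∑ a, χ a * (Pi.single s 1 : V → ℝ) a = 1 := by
              simp [Pi.single_apply, mul_ite, hχ, hs i]
            have e2 : ∑ a, χ a * (Pi.single t 1 : V → ℝ) a = 0 := by
              simp [Pi.single_apply, mul_ite, hχ, ht i]
            rw [e1, e2]; ring
    rw [hsf]
    have : ∀ a b, χ a * (1 - χ b) * f a b = χ a * f a b - χ a * χ b * f a b := by
      intro a b; ring
    simp only [this, Finset.sum_sub_distrib]
    rw [hmain, hanti]; ring
  -- per-cut Cauchy-Schwarz
  have hCS : ∀ i, ((edgeBoundary G (S i)).card : ℝ)⁻¹ ≤ ∑ p ∈ B i, (φ p.1 - φ p.2)^2 := by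
    intro i
    have h1 : (1:ℝ) ≤ (B i).card * ∑ p ∈ B i, (φ p.1 - φ p.2)^2 := by
      have h := sq_sum_le_card_mul_sum_sq (s := B i) (f := fun p => φ p.1 - φ p.2)
      rw [hflow i] at h
      simpa using h
    have h3 : (0:ℝ) < (B i).card := by
      by_contra h
      push_neg at h
      have h4 : ((B i).card : ℝ) = 0 := le_antisymm h (Nat.cast_nonneg _)
      rw [h4, zero_mul] at h1
      linarith
    rw [← hcard i, inv_eq_one_div, div_le_iff₀ h3]
    linarith [h1]
  -- energy per pair
  set E : V × V → ℝ := fun p => if G.Adj p.1 p.2 then (φ p.1 - φ p.2)^2 else 0 with hE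
  have hEnn : ∀ p, 0 ≤ E p := by
    intro p
    by_cases h : G.Adj p.1 p.2 <;> simp [hE, h, sq_nonneg]
  set C : Fin k → Finset (V × V) := fun i => B i ∪ (B i).image Prod.swap with hC
  have hswapmem : ∀ i (p : V × V),
      p ∈ (B i).image Prod.swap ↔ G.Adj p.2 p.1 ∧ p.2 ∈ S i ∧ p.1 ∉ S i := by
    intro i p
    constructor
    · intro h
      obtain ⟨q, hq, rfl⟩ := Finset.mem_image.mp h
      rw [hmemB] at hq
      exact ⟨hq.1, hq.2.1, hq.2.2⟩
    · intro h
      exact Finset.mem_image.mpr ⟨(p.2, p.1), (hmemB i _).mpr ⟨h.1, h.2.1, h.2.2⟩, rfl⟩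
  have hEB : ∀ (i : Fin k) (a b : V), G.Adj a b → a ∈ S i → b ∉ S i →
      s(a, b) ∈ edgeBoundary G (S i) := by
    intro i a b hadj ha hb
    simp only [edgeBoundary, Finset.mem_filter, SimpleGraph.mem_edgeFinset,
      SimpleGraph.mem_edgeSet]
    exact ⟨hadj, a, b, rfl, ha, hb⟩
  have hkey : ∀ (i : Fin k) p, p ∈ C i → s(p.1, p.2) ∈ edgeBoundary G (S i) := by
    intro i p hp
    rcases Finset.mem_union.mp hp with h | h
    · rw [hmemB] at h
      exact hEB i _ _ h.1 h.2.1 h.2.2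
    · rw [hswapmem] at h
      rw [Sym2.eq_swap]
      exact hEB i _ _ h.1 h.2.1 h.2.2
  have hdisjC : ∀ i j, i ≠ j → Disjoint (C i) (C j) := by
    intro i j hij
    rw [Finset.disjoint_left]
    intro p hpi hpj
    exact (Finset.disjoint_left.mp (hdisj i j hij) (hkey i p hpi)) (hkey j p hpj)
  have hinner : ∀ i, Disjoint (B i) ((B i).image Prod.swap) := by
    intro i
    rw [Finset.disjoint_left]
    intro p hp hp'
    rw [hmemB] at hp
    rw [hswapmem] at hp'
    exact hp'.2.2 hp.2.1
  have hCsum : ∀ i, ∑ p ∈ C i, E p = 2 * ∑ p ∈ B i, (φ p.1 - φ p.2)^2 := by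
    intro i
    rw [show C i = B i ∪ (B i).image Prod.swap from rfl, Finset.sum_union (hinner i)]
    have h1 : ∑ p ∈ B i, E p = ∑ p ∈ B i, (φ p.1 - φ p.2)^2 := by
      refine Finset.sum_congr rfl fun p hp => ?_
      rw [hmemB] at hp
      simp [hE, hp.1]
    have h2 : ∑ p ∈ (B i).image Prod.swap, E p = ∑ p ∈ B i, (φ p.1 - φ p.2)^2 := by
      rw [Finset.sum_image (fun p _ q _ h => Prod.swap_injective h)]
      refine Finset.sum_congr rfl fun p hp => ?_
      rw [hmemB] at hp
      simp only [hE, Prod.fst_swap, Prod.snd_swap, if_pos hp.1.symm]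
      ring
    rw [h1, h2]
    ring
  have htotal : ∑ p : V × V, E p = 2 * effRes Lp s t := by
    have h1 : ∑ p : V × V, E p
        = ∑ a, ∑ b, if G.Adj a b then (φ a - φ b)^2 else 0 :=
      Fintype.sum_prod_type' (f := fun a b => if G.Adj a b then (φ a - φ b)^2 else 0)
    rw [h1, hres]
    ring
  have hbig : ∑ i, ∑ p ∈ C i, E p ≤ 2 * effRes Lp s t := by
    have hpd : (↑(Finset.univ : Finset (Fin k)) : Set (Fin k)).PairwiseDisjoint C := by
      intro i _ j _ hij
      exact hdisjC i j hij
    rw [← Finset.sum_biUnion hpd, ← htotal]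
    exact Finset.sum_le_sum_of_subset_of_nonneg (Finset.subset_univ _)
      (fun p _ _ => hEnn p)
  calc ∑ i, ((edgeBoundary G (S i)).card : ℝ)⁻¹
      ≤ ∑ i, ∑ p ∈ B i, (φ p.1 - φ p.2)^2 := Finset.sum_le_sum fun i _ => hCS i
    _ ≤ effRes Lp s t := by
        have h1 : ∑ i, ∑ p ∈ C i, E p = 2 * ∑ i, ∑ p ∈ B i, (φ p.1 - φ p.2)^2 := by
          rw [Finset.mul_sum]
          exact Finset.sum_congr rfl fun i _ => hCsum i
        rw [h1] at hbig
        linarith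
end

section
/- For a connected weighted graph G and a vertex subset U, the effective resistance between any two vertices u, v ∈ U in G equals the effective resistance between u and v in the Schur complement graph G_U. -/
open Matrix

/-- A symmetric, nonnegative edge-weight function with zero diagonal,
encoding a weighted graph (weight `0` means no edge). -/
structure IsWeight {V : Type*} (w : V → V → ℝ) : Prop where
  symm : ∀ u v, w u v = w v u
  nonneg : ∀ u v, 0 ≤ w u v
  loopless : ∀ v, w v v = 0

/-- The support graph of a weight function: `u ~ v` iff `u ≠ v` and `w u v ≠ 0`. -/
def supportGraph {V : Type*} (w : V → V → ℝ) : SimpleGraph V :=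
  SimpleGraph.fromRel fun u v => w u v ≠ 0

/-- The weighted graph Laplacian `L = D - A`. -/
noncomputable def wLap {V : Type*} [Fintype V] [DecidableEq V] (w : V → V → ℝ) :
    Matrix V V ℝ :=
  Matrix.diagonal (fun v => ∑ u, w v u) - Matrix.of w

open scoped Classical

/-- The Schur complement of a matrix `L` on the index set `U`:
`L(U,U) - L(U,Ū) L(Ū,Ū)⁻¹ L(Ū,U)`. -/
noncomputable def schurCompl {V : Type*} [Fintype V] [DecidableEq V]
    (L : Matrix V V ℝ) (U : Set V) : Matrix U U ℝ :=
  L.submatrix (Subtype.val : U → V) (Subtype.val : U → V) -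
    L.submatrix (Subtype.val : U → V) (Subtype.val : (↥Uᶜ) → V) *
      (L.submatrix (Subtype.val : (↥Uᶜ) → V) (Subtype.val : (↥Uᶜ) → V))⁻¹ *
      L.submatrix (Subtype.val : (↥Uᶜ) → V) (Subtype.val : U → V)

section AuxEffRes

set_option linter.unusedSectionVars false

variable {V : Type*} [Fintype V] [DecidableEq V]

lemma wLap_mulVec (w : V → V → ℝ) (f : V → ℝ) (i : V) :
    (wLap w *ᵥ f) i = ∑ j, w i j * (f i - f j) := by
  simp only [wLap, mulVec, dotProduct, Matrix.sub_apply, diagonal, of_apply, sub_mul,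
    Finset.sum_sub_distrib, mul_sub, ite_mul, zero_mul,
    Finset.sum_ite_eq, Finset.mem_univ, if_true]
  rw [Finset.sum_mul]

lemma wLap_transpose (w : V → V → ℝ) (hw : IsWeight w) : (wLap w)ᵀ = wLap w := by
  ext i j
  simp only [wLap, transpose_apply, Matrix.sub_apply, diagonal, of_apply]
  rcases eq_or_ne i j with h | h
  · simp [h]
  · simp [h, Ne.symm h, hw.symm i j]

lemma sum_split (U : Set V) (g : V → ℝ) :
    ∑ i, g i = (∑ i : U, g ↑i) + ∑ i : ↥(Uᶜ), g ↑i := by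
  rw [← Equiv.sum_comp (Equiv.Set.sumCompl U) g, Fintype.sum_sum_type]
  simp

lemma wLap_quad (w : V → V → ℝ) (hw : IsWeight w) (f : V → ℝ) :
    2 * (f ⬝ᵥ (wLap w *ᵥ f)) = ∑ i, ∑ j, w i j * (f i - f j)^2 := by
  have hT : f ⬝ᵥ (wLap w *ᵥ f) = ∑ i, ∑ j, w i j * (f i * (f i - f j)) := by
    simp only [dotProduct, wLap_mulVec, Finset.mul_sum]
    exact Finset.sum_congr rfl fun i _ => Finset.sum_congr rfl fun j _ => by ring
  have hswap : ∑ i, ∑ j, w i j * (f j * (f j - f i))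
      = ∑ i, ∑ j, w i j * (f i * (f i - f j)) := by
    rw [Finset.sum_comm]
    exact Finset.sum_congr rfl fun i _ => Finset.sum_congr rfl fun j _ => by rw [hw.symm j i]
  calc 2 * (f ⬝ᵥ (wLap w *ᵥ f))
      = ∑ i, ∑ j, w i j * (f i * (f i - f j))
        + ∑ i, ∑ j, w i j * (f j * (f j - f i)) := by rw [hT, hswap]; ring
    _ = ∑ i, ∑ j, w i j * (f i - f j)^2 := by
        rw [← Finset.sum_add_distrib]
        refine Finset.sum_congr rfl fun i _ => ?_
        rw [← Finset.sum_add_distrib]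
        exact Finset.sum_congr rfl fun j _ => by ring

lemma const_of_quad_zero (w : V → V → ℝ) (hw : IsWeight w)
    (hconn : (supportGraph w).Connected) (f : V → ℝ)
    (h : f ⬝ᵥ (wLap w *ᵥ f) = 0) : ∀ i j, f i = f j := by
  have h2 : ∑ i, ∑ j, w i j * (f i - f j)^2 = 0 := by rw [← wLap_quad w hw f, h]; ring
  have hterm : ∀ i j, w i j * (f i - f j)^2 = 0 := by
    have hnn : ∀ i ∈ Finset.univ, (0:ℝ) ≤ ∑ j, w i j * (f i - f j)^2 := fun i _ =>
      Finset.sum_nonneg fun j _ => mul_nonneg (hw.nonneg i j) (sq_nonneg _)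
    intro i j
    have hi := (Finset.sum_eq_zero_iff_of_nonneg hnn).1 h2 i (Finset.mem_univ i)
    exact (Finset.sum_eq_zero_iff_of_nonneg
      (fun j _ => mul_nonneg (hw.nonneg i j) (sq_nonneg _))).1 hi j (Finset.mem_univ j)
  have hadj : ∀ i j : V, (supportGraph w).Adj i j → f i = f j := by
    intro i j hij
    rw [supportGraph, SimpleGraph.fromRel_adj] at hij
    obtain ⟨hne, hne0⟩ := hij
    have hwij : w i j ≠ 0 := by
      rcases hne0 with h' | h'
      · exact h'
      · rw [hw.symm]; exact h'
    have := hterm i j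
    rcases mul_eq_zero.1 this with h' | h'
    · exact absurd h' hwij
    · have := pow_eq_zero_iff (n := 2) (by norm_num) |>.1 h'
      linarith [sub_eq_zero.1 this]
  intro i j
  obtain ⟨p⟩ := hconn i j
  induction p with
  | nil => rfl
  | cons ha _ ih => exact (hadj _ _ ha).trans ih

lemma wLap_colsum (w : V → V → ℝ) (hw : IsWeight w) (k : V) :
    ∑ i, (wLap w) i k = 0 := by
  simp only [wLap, Matrix.sub_apply, diagonal, of_apply, Finset.sum_sub_distrib,
    Finset.sum_ite_eq, Finset.sum_ite_eq', Finset.mem_univ, if_true]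
  rw [sub_eq_zero]
  exact Finset.sum_congr rfl fun i _ => hw.symm k i

lemma solve_lap (w : V → V → ℝ) (hw : IsWeight w)
    (hconn : (supportGraph w).Connected) (Lp : Matrix V V ℝ)
    (hLp : IsMoorePenrose (wLap w) Lp) [Nonempty V] (x : V → ℝ) (hx : ∑ i, x i = 0) :
    wLap w *ᵥ (Lp *ᵥ x) = x := by
  set L := wLap w with hL
  have hLsym : Lᵀ = L := wLap_transpose w hw
  have hLLLp : L * (L * Lp) = L := by
    calc L * (L * Lp) = ((L * Lp)ᵀ * Lᵀ)ᵀ := by rw [transpose_mul, transpose_transpose, transpose_transpose]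
      _ = (L * Lp * L)ᵀ := by rw [hLp.2.2.1, hLsym]
      _ = Lᵀ := by rw [hLp.1]
      _ = L := hLsym
  set q : V → ℝ := x - (L * Lp) *ᵥ x with hq
  have hLq : L *ᵥ q = 0 := by
    rw [hq, mulVec_sub, mulVec_mulVec, hLLLp, sub_self]
  have hconst : ∀ i j, q i = q j :=
    const_of_quad_zero w hw hconn q (by rw [hLq, dotProduct_zero])
  have hsq : ∑ i, q i = 0 := by
    have hPx : ∑ i, ((L * Lp) *ᵥ x) i = 0 := by
      simp only [mulVec, dotProduct, mul_apply]
      rw [Finset.sum_comm]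
      refine Finset.sum_eq_zero fun j _ => ?_
      rw [← Finset.sum_mul]
      have : ∑ i, ∑ k, L i k * Lp k j = 0 := by
        rw [Finset.sum_comm]
        refine Finset.sum_eq_zero fun k _ => ?_
        rw [← Finset.sum_mul, wLap_colsum w hw k, zero_mul]
      rw [this, zero_mul]
    simp only [hq, Pi.sub_apply, Finset.sum_sub_distrib, hx, hPx, sub_zero]
  have i0 : V := Classical.arbitrary V
  have hq0 : ∀ i, q i = 0 := by
    intro i
    have hall : ∑ j, q j = (Fintype.card V : ℝ) * q i := by
      rw [Finset.sum_congr rfl fun j _ => hconst j i, Finset.sum_const, nsmul_eq_mul]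
      rfl
    have hcard : (0:ℝ) < Fintype.card V := by exact_mod_cast Fintype.card_pos
    have h0 := hall.symm.trans hsq
    rcases mul_eq_zero.1 h0 with h' | h'
    · exact absurd h' (ne_of_gt hcard)
    · exact h'
  have : (L * Lp) *ᵥ x = x := by
    funext i
    have := hq0 i
    simp only [hq, Pi.sub_apply] at this
    linarith
  rwa [← mulVec_mulVec] at this

lemma block_invertible (w : V → V → ℝ) (hw : IsWeight w)
    (hconn : (supportGraph w).Connected) (U : Set V) (hU : U.Nonempty) :
    IsUnit ((wLap w).submatrix (Subtype.val : (↥Uᶜ) → V) (Subtype.val : (↥Uᶜ) → V)).det := by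
  set D := (wLap w).submatrix (Subtype.val : (↥Uᶜ) → V) (Subtype.val : (↥Uᶜ) → V) with hD
  rw [isUnit_iff_ne_zero]
  intro hdet
  obtain ⟨g, hg, hDg⟩ := (Matrix.exists_mulVec_eq_zero_iff).2 hdet
  set f : V → ℝ := fun i => if h : i ∈ Uᶜ then g ⟨i, h⟩ else 0 with hf
  have hfU : ∀ i : V, i ∈ U → f i = 0 := by
    intro i hi
    simp only [hf]
    rw [dif_neg (by simp [hi])]
  have hfW : ∀ i : ↥(Uᶜ), f ↑i = g i := by
    intro i
    simp only [hf]
    rw [dif_pos i.2]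
  have hLf : ∀ i : ↥(Uᶜ), (wLap w *ᵥ f) ↑i = 0 := by
    intro i
    have : (wLap w *ᵥ f) ↑i = ∑ j, wLap w ↑i j * f j := rfl
    rw [this, sum_split U (fun j => wLap w ↑i j * f j)]
    have h1 : ∑ j : U, wLap w ↑i ↑j * f ↑j = 0 :=
      Finset.sum_eq_zero fun j _ => by rw [hfU ↑j j.2, mul_zero]
    have h2 : ∑ j : ↥(Uᶜ), wLap w ↑i ↑j * f ↑j = (D *ᵥ g) i := by
      simp only [hD, mulVec, dotProduct, submatrix_apply]
      exact Finset.sum_congr rfl fun j _ => by rw [hfW j]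
    rw [h1, h2, hDg, zero_add]
    rfl
  have hquad : f ⬝ᵥ (wLap w *ᵥ f) = 0 := by
    rw [dotProduct, sum_split U (fun i => f i * (wLap w *ᵥ f) i)]
    have h1 : ∑ i : U, f ↑i * (wLap w *ᵥ f) ↑i = 0 :=
      Finset.sum_eq_zero fun i _ => by rw [hfU ↑i i.2, zero_mul]
    have h2 : ∑ i : ↥(Uᶜ), f ↑i * (wLap w *ᵥ f) ↑i = 0 :=
      Finset.sum_eq_zero fun i _ => by rw [hLf i, mul_zero]
    rw [h1, h2, add_zero]
  have hconst := const_of_quad_zero w hw hconn f hquad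
  obtain ⟨u0, hu0⟩ := hU
  apply hg
  funext i
  have : f ↑i = f u0 := hconst ↑i u0
  rw [hfW i, hfU u0 hu0] at this
  exact this

lemma schur_solve (w : V → V → ℝ) (U : Set V)
    (hD : IsUnit ((wLap w).submatrix (Subtype.val : (↥Uᶜ) → V) (Subtype.val : (↥Uᶜ) → V)).det)
    (z x : V → ℝ) (hLz : wLap w *ᵥ z = x) (hx0 : ∀ i, i ∉ U → x i = 0) :
    schurCompl (wLap w) U *ᵥ (fun i : U => z ↑i) = fun i : U => x ↑i := by
  set L := wLap w with hLdef
  set A := L.submatrix (Subtype.val : U → V) (Subtype.val : U → V) with hA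
  set B := L.submatrix (Subtype.val : U → V) (Subtype.val : (↥Uᶜ) → V) with hB
  set C := L.submatrix (Subtype.val : (↥Uᶜ) → V) (Subtype.val : U → V) with hC
  set D := L.submatrix (Subtype.val : (↥Uᶜ) → V) (Subtype.val : (↥Uᶜ) → V) with hDdef
  set zU : U → ℝ := fun i => z ↑i with hzU
  set zW : ↥(Uᶜ) → ℝ := fun i => z ↑i with hzW
  have hrow : ∀ i : V, (∑ j : U, L i ↑j * z ↑j) + ∑ j : ↥(Uᶜ), L i ↑j * z ↑j = x i := by
    intro i
    rw [← sum_split U (fun j => L i j * z j)]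
    exact congrFun hLz i
  have h2 : D *ᵥ zW = -(C *ᵥ zU) := by
    funext i
    have hr := hrow ↑i
    rw [hx0 ↑i i.2] at hr
    simp only [hDdef, hC, mulVec, dotProduct, submatrix_apply, Pi.neg_apply, hzU, hzW]
    linarith [hr]
  have hzWeq : (D⁻¹ * C) *ᵥ zU = -zW := by
    have h3 : D⁻¹ *ᵥ (D *ᵥ zW) = D⁻¹ *ᵥ (-(C *ᵥ zU)) := by rw [h2]
    rw [mulVec_mulVec, Matrix.nonsing_inv_mul D hD, one_mulVec, mulVec_neg,
      mulVec_mulVec] at h3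
    rw [h3, neg_neg]
  have hSdef : schurCompl L U = A - B * (D⁻¹ * C) := by
    rw [schurCompl, ← Matrix.mul_assoc]
  rw [hSdef, sub_mulVec, ← mulVec_mulVec, hzWeq, mulVec_neg, sub_neg_eq_add]
  funext i
  simp only [Pi.add_apply, hA, hB, mulVec, dotProduct, submatrix_apply]
  exact hrow ↑i

lemma dotlem {n : Type*} [Fintype n] (M : Matrix n n ℝ) (a b : n → ℝ) :
    (M *ᵥ a) ⬝ᵥ b = a ⬝ᵥ (Mᵀ *ᵥ b) := by
  rw [dotProduct_mulVec, vecMul_transpose]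

lemma schur_transpose (L : Matrix V V ℝ) (hLsym : Lᵀ = L) (U : Set V) :
    (schurCompl L U)ᵀ = schurCompl L U := by
  set A := L.submatrix (Subtype.val : U → V) (Subtype.val : U → V) with hA
  set B := L.submatrix (Subtype.val : U → V) (Subtype.val : (↥Uᶜ) → V) with hB
  set C := L.submatrix (Subtype.val : (↥Uᶜ) → V) (Subtype.val : U → V) with hC
  set D := L.submatrix (Subtype.val : (↥Uᶜ) → V) (Subtype.val : (↥Uᶜ) → V) with hDdef
  have hAt : Aᵀ = A := by rw [hA, transpose_submatrix, hLsym]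
  have hBt : Bᵀ = C := by rw [hB, hC, transpose_submatrix, hLsym]
  have hCt : Cᵀ = B := by rw [hB, hC, transpose_submatrix, hLsym]
  have hDt : Dᵀ = D := by rw [hDdef, transpose_submatrix, hLsym]
  have hDinvT : (D⁻¹)ᵀ = D⁻¹ := by rw [Matrix.transpose_nonsing_inv, hDt]
  show (A - B * D⁻¹ * C)ᵀ = A - B * D⁻¹ * C
  rw [transpose_sub, transpose_mul, transpose_mul, hAt, hBt, hCt, hDinvT,
    Matrix.mul_assoc]

end AuxEffRes

/-- Effective resistances between vertices of `U` are preserved by taking the Schur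
complement of the Laplacian on `U`. -/
theorem effRes_schurCompl {V : Type*} [Fintype V] [DecidableEq V]
    (w : V → V → ℝ) (hw : IsWeight w) (hconn : (supportGraph w).Connected)
    (U : Set V)
    (Lp : Matrix V V ℝ) (hLp : IsMoorePenrose (wLap w) Lp)
    (Mp : Matrix U U ℝ) (hMp : IsMoorePenrose (schurCompl (wLap w) U) Mp)
    (u v : U) :
    effRes Mp u v = effRes Lp (u : V) (v : V) := by
  classical
  have : Nonempty V := ⟨↑u⟩
  set L := wLap w with hLdef
  have hLsym : Lᵀ = L := wLap_transpose w hw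
  set x : V → ℝ := Pi.single (↑u : V) 1 - Pi.single (↑v : V) 1 with hxdef
  have hx : ∑ i, x i = 0 := by
    simp [hxdef, Finset.sum_sub_distrib]
  set z := Lp *ᵥ x with hzdef
  have hLz : L *ᵥ z = x := solve_lap w hw hconn Lp hLp x hx
  have hUne : U.Nonempty := ⟨↑u, u.2⟩
  have hD := block_invertible w hw hconn U hUne
  have hx0 : ∀ i, i ∉ U → x i = 0 := by
    intro i hi
    have h1 : i ≠ ↑u := fun h => hi (h ▸ u.2)
    have h2 : i ≠ ↑v := fun h => hi (h ▸ v.2)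
    simp [hxdef, Pi.single_apply, h1, h2]
  set y : U → ℝ := Pi.single u 1 - Pi.single v 1 with hydef
  have hxy : (fun i : U => x ↑i) = y := by
    funext i
    simp only [hxdef, hydef, Pi.sub_apply, Pi.single_apply, Subtype.coe_inj]
  set zU : U → ℝ := fun i => z ↑i with hzU
  have hSz : schurCompl L U *ᵥ zU = y := by
    rw [schur_solve w U hD z x hLz hx0, hxy]
  set S := schurCompl L U with hSdef
  have hSsym : Sᵀ = S := schur_transpose L hLsym U
  have hMside : effRes Mp u v = zU ⬝ᵥ y := by
    show y ⬝ᵥ (Mp *ᵥ y) = zU ⬝ᵥ y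
    rw [← hSz, dotlem, hSsym, mulVec_mulVec, mulVec_mulVec, hMp.1]
  have hLside : effRes Lp ↑u ↑v = x ⬝ᵥ z := rfl
  rw [hMside, hLside]
  rw [← hxy]
  show zU ⬝ᵥ (fun i : U => x ↑i) = x ⬝ᵥ z
  rw [dotProduct_comm, dotProduct, dotProduct]
  rw [sum_split U (fun i => x i * z i)]
  have h0 : ∑ i : ↥(Uᶜ), x ↑i * z ↑i = 0 :=
    Finset.sum_eq_zero fun i _ => by rw [hx0 ↑i i.2, zero_mul]
  rw [h0, add_zero]
end

section
/- In a connected unweighted graph, the effective resistance between any pair of vertices lying in two different edge-biconnected components is at least one. -/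
open Matrix

/-- In a connected unweighted graph, the effective resistance between two vertices lying in
different edge-biconnected components (i.e. separated by some cut edge) is at least one. -/
theorem one_le_effRes_of_separated_by_cutEdge {V : Type*} [Fintype V] [DecidableEq V]
    (G : SimpleGraph V) [DecidableRel G.Adj] (hconn : G.Connected)
    (Lp : Matrix V V ℝ) (hLp : IsMoorePenrose (G.lapMatrix ℝ) Lp)
    {u v : V}
    (hsep : ∃ a b, G.Adj a b ∧ ¬ (G.deleteEdges {s(a, b)}).Reachable u v) :
    1 ≤ effRes Lp u v := by
  classical
  obtain ⟨a, b, hab, hnr⟩ := hsep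
  set L : Matrix V V ℝ := G.lapMatrix ℝ with hL
  have hLsym : Lᵀ = L := G.isSymm_lapMatrix (R := ℝ)
  set d : V → ℝ := Pi.single u 1 - Pi.single v 1 with hd
  set x : V → ℝ := Lp *ᵥ d with hx
  -- Step 1: L * (L * Lp) = L
  have hLP : L * (L * Lp) = L := by
    have h1 : (L * (L * Lp))ᵀ = L := by
      rw [transpose_mul, hLp.2.2.1, hLsym]; exact hLp.1
    calc L * (L * Lp) = ((L * (L * Lp))ᵀ)ᵀ := by rw [transpose_transpose]
    _ = Lᵀ := by rw [h1]
    _ = L := hLsym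
  -- Step 2: L *ᵥ x = d
  set w : V → ℝ := d - L *ᵥ x with hw
  have hLw : L *ᵥ w = 0 := by
    rw [hw, mulVec_sub, hx, mulVec_mulVec, mulVec_mulVec, mul_assoc, hLP, sub_self]
  have hwconst : ∀ i j : V, w i = w j := by
    intro i j
    exact (G.lapMatrix_mulVec_eq_zero_iff_forall_reachable (x := w)).mp
      hLw i j (hconn i j)
  have hwd : w ⬝ᵥ d = 0 := by
    rw [hd, dotProduct_sub, dotProduct_single, dotProduct_single, hwconst u v]
    ring
  have hwLx : w ⬝ᵥ (L *ᵥ x) = 0 := by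
    rw [dotProduct_mulVec, ← mulVec_transpose, hLsym, hLw, zero_dotProduct]
  have hww : w ⬝ᵥ w = 0 := by
    have : w ⬝ᵥ w = w ⬝ᵥ d - w ⬝ᵥ (L *ᵥ x) := by rw [hw, dotProduct_sub]
    rw [this, hwd, hwLx, sub_zero]
  have hLx : L *ᵥ x = d := by
    have hw0 : w = 0 := dotProduct_self_eq_zero.mp hww
    have h0 : d - L *ᵥ x = 0 := by rw [← hw, hw0]
    exact (sub_eq_zero.mp h0).symm
  -- the indicator function of the component of u in G minus the cut edge
  set f : V → ℝ := fun y => if (G.deleteEdges {s(a, b)}).Reachable u y then 1 else 0 with hf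
  have hf01 : ∀ y, f y = 0 ∨ f y = 1 := by
    intro y; by_cases h : (G.deleteEdges {s(a, b)}).Reachable u y <;> simp [hf, h]
  have hfd : f ⬝ᵥ d = 1 := by
    rw [hd, dotProduct_sub, dotProduct_single, dotProduct_single]
    have hfu : f u = 1 := by
      simp only [hf]; rw [if_pos (SimpleGraph.Reachable.refl u)]
    have hfv : f v = 0 := by
      simp only [hf]; rw [if_neg hnr]
    rw [hfu, hfv]; ring
  -- quadratic form bound for f
  have hQf : f ⬝ᵥ (L *ᵥ f) ≤ 1 := by
    have hq : f ⬝ᵥ (L *ᵥ f) =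
        (∑ i, ∑ j, if G.Adj i j then (f i - f j) ^ 2 else 0) / 2 := by
      have hq' := SimpleGraph.lapMatrix_toLinearMap₂' (R := ℝ) (G := G) f
      rw [Matrix.toLinearMap₂'_apply'] at hq'
      exact hq'
    have hadj : ∀ i j : V, G.Adj i j → s(i, j) ≠ s(a, b) → f i = f j := by
      intro i j hij hne
      have hadj' : (G.deleteEdges {s(a, b)}).Adj i j :=
        SimpleGraph.deleteEdges_adj.mpr ⟨hij, by simpa using hne⟩
      have : (G.deleteEdges {s(a, b)}).Reachable u i ↔
          (G.deleteEdges {s(a, b)}).Reachable u j :=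
        ⟨fun h => h.trans hadj'.reachable, fun h => h.trans hadj'.symm.reachable⟩
      simp only [hf]
      by_cases h : (G.deleteEdges {s(a, b)}).Reachable u i
      · rw [if_pos h, if_pos (this.mp h)]
      · rw [if_neg h, if_neg (fun h' => h (this.mpr h'))]
    have hbound : ∀ i j : V, (if G.Adj i j then (f i - f j) ^ 2 else 0) ≤
        (if i = a ∧ j = b then (1 : ℝ) else 0) + (if i = b ∧ j = a then 1 else 0) := by
      intro i j
      have hsq : (f i - f j) ^ 2 ≤ 1 := by
        rcases hf01 i with h1 | h1 <;> rcases hf01 j with h2 | h2 <;>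
          rw [h1, h2] <;> norm_num
      by_cases hij : G.Adj i j
      · rw [if_pos hij]
        by_cases hpair : s(i, j) = s(a, b)
        · rcases Sym2.eq_iff.mp hpair with h | h
          · rw [if_pos h]
            have h0 : (0 : ℝ) ≤ if i = b ∧ j = a then 1 else 0 := by
              split_ifs <;> norm_num
            linarith
          · rw [if_pos h]
            have h0 : (0 : ℝ) ≤ if i = a ∧ j = b then 1 else 0 := by
              split_ifs <;> norm_num
            linarith
        · rw [hadj i j hij hpair, sub_self]
          split_ifs <;> norm_num
      · rw [if_neg hij]
        split_ifs <;> norm_num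
    have hsum : ∑ i, ∑ j, ((if i = a ∧ j = b then (1 : ℝ) else 0) +
        (if i = b ∧ j = a then 1 else 0)) = 2 := by
      have h1 : ∑ i : V, ∑ j : V, (if i = a ∧ j = b then (1 : ℝ) else 0) = 1 := by
        simp [ite_and, Finset.sum_ite_eq]
      have h2 : ∑ i : V, ∑ j : V, (if i = b ∧ j = a then (1 : ℝ) else 0) = 1 := by
        simp [ite_and, Finset.sum_ite_eq]
      rw [Finset.sum_congr rfl (fun i _ => Finset.sum_add_distrib),
        Finset.sum_add_distrib, h1, h2]
      norm_num
    have : ∑ i, ∑ j, (if G.Adj i j then (f i - f j) ^ 2 else 0) ≤ 2 := by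
      calc ∑ i, ∑ j, (if G.Adj i j then (f i - f j) ^ 2 else 0)
          ≤ ∑ i, ∑ j, ((if i = a ∧ j = b then (1 : ℝ) else 0) +
            (if i = b ∧ j = a then 1 else 0)) :=
            Finset.sum_le_sum fun i _ => Finset.sum_le_sum fun j _ => hbound i j
        _ = 2 := hsum
    rw [hq]; linarith
  -- positive semidefiniteness
  have hpsd := SimpleGraph.posSemidef_lapMatrix ℝ G
  have hQ : ∀ y : V → ℝ, 0 ≤ y ⬝ᵥ (L *ᵥ y) := by
    intro y
    have := hpsd.dotProduct_mulVec_nonneg y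
    simpa using this
  -- symmetry of the bilinear form
  have hsymm : ∀ y z : V → ℝ, y ⬝ᵥ (L *ᵥ z) = z ⬝ᵥ (L *ᵥ y) := by
    intro y z
    rw [dotProduct_mulVec, ← mulVec_transpose, hLsym, dotProduct_comm]
  have hfx : f ⬝ᵥ (L *ᵥ x) = 1 := by rw [hLx, hfd]
  have hxf : x ⬝ᵥ (L *ᵥ f) = 1 := by rw [hsymm, hfx]
  have heff : effRes Lp u v = x ⬝ᵥ (L *ᵥ x) := by
    rw [effRes, ← hd, ← hx, ← hLx, dotProduct_comm]
  have hexp : (f - x) ⬝ᵥ (L *ᵥ (f - x)) =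
      f ⬝ᵥ (L *ᵥ f) - f ⬝ᵥ (L *ᵥ x) - x ⬝ᵥ (L *ᵥ f) + x ⬝ᵥ (L *ᵥ x) := by
    rw [mulVec_sub, dotProduct_sub, sub_dotProduct, sub_dotProduct]
    ring
  have := hQ (f - x)
  rw [hexp, hfx, hxf] at this
  rw [heff]
  linarith
end

section
/- Uniqueness of graph completion from effective resistances: let I ⊔ J partition the unordered pairs of [n], let w: I → ℝ_{≥0} and r: J → ℝ_{>0}. Then there is at most one connected weighted graph G on [n] whose edge weight on every pair in I equals w and whose effective resistance on every pair in J equals r. Equivalently, if two connected weighted graphs G, H on [n] agree on edge weights for all pairs in I and satisfy res_G(i,j) = res_H(i,j) for all (i,j) ∈ J, then G = H. -/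
open Matrix

section Aux

open Finset

variable {V : Type*} [Fintype V] [DecidableEq V]

/-- All-ones matrix. -/
noncomputable def Jmat (V : Type*) : Matrix V V ℝ := Matrix.of fun _ _ => 1

lemma Jmat_mul_Jmat : Jmat V * Jmat V = (Fintype.card V : ℝ) • Jmat V := by
  ext i j
  simp [Jmat, Matrix.mul_apply, Finset.card_univ]

lemma wLap_transpose_s17 {w : V → V → ℝ} (hs : ∀ u v, w u v = w v u) :
    (wLap w)ᵀ = wLap w := by
  ext i j
  simp only [wLap, Matrix.transpose_apply, Matrix.sub_apply, Matrix.diagonal_apply,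
    Matrix.of_apply]
  by_cases h : i = j
  · subst h; simp
  · simp [h, Ne.symm h, hs i j]

lemma wLap_mul_Jmat (w : V → V → ℝ) : wLap w * Jmat V = 0 := by
  ext i j
  simp [wLap, Jmat, Matrix.mul_apply, Matrix.sub_apply, Matrix.diagonal_apply, Finset.sum_sub_distrib]

lemma Jmat_mul_wLap {w : V → V → ℝ} (hs : ∀ u v, w u v = w v u) : Jmat V * wLap w = 0 := by
  have h := congrArg Matrix.transpose (wLap_mul_Jmat w)
  rwa [Matrix.transpose_mul, wLap_transpose_s17 hs, Matrix.transpose_zero,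
    show (Jmat V)ᵀ = Jmat V from rfl] at h

lemma Jmat_mulVec_single_sub (u v : V) :
    Jmat V *ᵥ (Pi.single u 1 - Pi.single v 1) = 0 := by
  funext i
  simp [Jmat, Matrix.mulVec, dotProduct, Finset.sum_sub_distrib, Pi.single_apply]

/-- The Laplacian quadratic form. -/
lemma wLap_quadForm {w : V → V → ℝ} (hs : ∀ u v, w u v = w v u) (x : V → ℝ) :
    2 * (x ⬝ᵥ wLap w *ᵥ x) = ∑ u, ∑ v, w u v * (x u - x v) ^ 2 := by
  have hswap : ∀ f : V → V → ℝ, (∑ u, ∑ v, w u v * f u v) = ∑ u, ∑ v, w u v * f v u := by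
    intro f
    rw [Finset.sum_comm]
    refine Finset.sum_congr rfl fun u _ => Finset.sum_congr rfl fun v _ => ?_
    rw [hs u v]
  have expand : x ⬝ᵥ wLap w *ᵥ x
      = ∑ u, ((∑ v, w u v * (x u * x u)) - ∑ v, w u v * (x u * x v)) := by
    simp only [dotProduct, wLap, Matrix.sub_mulVec, Pi.sub_apply, Matrix.mulVec_diagonal]
    refine Finset.sum_congr rfl fun u _ => ?_
    rw [show (Matrix.of w *ᵥ x) u = ∑ v, w u v * x v from rfl]
    rw [mul_sub, Finset.sum_mul, Finset.mul_sum, Finset.mul_sum, ← Finset.sum_sub_distrib,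
      ← Finset.sum_sub_distrib]
    exact Finset.sum_congr rfl fun v _ => by ring
  rw [Finset.sum_sub_distrib] at expand
  rw [expand]
  have h1 : (∑ u, ∑ v, w u v * (x u * x u)) = ∑ u, ∑ v, w u v * (x v * x v) := by
    simpa using hswap (fun a b => x a * x a)
  have h2 : (∑ u, ∑ v, w u v * (x u - x v) ^ 2)
      = ((∑ u, ∑ v, w u v * (x u * x u)) + ∑ u, ∑ v, w u v * (x v * x v))
        - ∑ u, ∑ v, 2 * (w u v * (x u * x v)) := by
    simp only [← Finset.sum_add_distrib, ← Finset.sum_sub_distrib]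
    exact Finset.sum_congr rfl fun u _ => Finset.sum_congr rfl fun v _ => by ring
  have h3 : (∑ u, ∑ v, 2 * (w u v * (x u * x v)))
      = 2 * ∑ u, ∑ v, w u v * (x u * x v) := by
    simp [Finset.mul_sum]
  rw [h2, ← h1, h3]
  ring

end Aux
open scoped MatrixOrder
section Aux2

variable {V : Type*} [Fintype V] [DecidableEq V]

lemma effRes_entries (M : Matrix V V ℝ) (u v : V) :
    effRes M u v = M u u + M v v - M u v - M v u := by
  simp only [effRes, Matrix.mulVec_sub, Matrix.mulVec_single, sub_dotProduct,
    dotProduct_sub, single_dotProduct]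
  simp only [Pi.sub_apply, mul_one, MulOpposite.op_one, one_smul, Pi.smul_apply, Matrix.col_apply]
  ring

lemma effRes_add_smul_Jmat (M : Matrix V V ℝ) (c : ℝ) (u v : V) :
    effRes (M + c • Jmat V) u v = effRes M u v := by
  simp only [effRes, Matrix.add_mulVec, Matrix.smul_mulVec, Jmat_mulVec_single_sub,
    smul_zero, add_zero]

/-- Trace of `M * wLap d` as a weighted sum. -/
lemma trace_mul_wLap (M : Matrix V V ℝ) (d : V → V → ℝ) :
    Matrix.trace (M * wLap d) = ∑ u, ∑ v, d u v * (M u u - M v u) := by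
  have hsplit : M * wLap d
      = M * Matrix.diagonal (fun t => ∑ k, d t k) - M * Matrix.of d := by
    rw [wLap, Matrix.mul_sub]
  rw [hsplit, Matrix.trace_sub]
  have hdiag : Matrix.trace (M * Matrix.diagonal (fun t => ∑ k, d t k))
      = ∑ u, ∑ v, d u v * M u u := by
    simp only [Matrix.trace, Matrix.diag, Matrix.mul_diagonal]
    exact Finset.sum_congr rfl fun u _ => by
      rw [mul_comm, Finset.sum_mul]
  have hoff : Matrix.trace (M * Matrix.of d) = ∑ u, ∑ v, d u v * M v u := by
    simp only [Matrix.trace, Matrix.diag, Matrix.mul_apply, Matrix.of_apply]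
    rw [Finset.sum_comm]
    exact Finset.sum_congr rfl fun u _ => Finset.sum_congr rfl fun v _ => by ring
  rw [hdiag, hoff, ← Finset.sum_sub_distrib]
  exact Finset.sum_congr rfl fun u _ => by
    rw [← Finset.sum_sub_distrib]
    exact Finset.sum_congr rfl fun v _ => by ring

lemma two_trace_mul_wLap (M : Matrix V V ℝ) {d : V → V → ℝ} (hs : ∀ u v, d u v = d v u) :
    2 * Matrix.trace (M * wLap d) = ∑ u, ∑ v, d u v * effRes M u v := by
  rw [trace_mul_wLap]
  have hswap : (∑ u, ∑ v, d u v * (M u u - M v u))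
      = ∑ u, ∑ v, d u v * (M v v - M u v) := by
    rw [Finset.sum_comm]
    exact Finset.sum_congr rfl fun u _ => Finset.sum_congr rfl fun v _ => by rw [hs v u]
  have h2 : 2 * (∑ u, ∑ v, d u v * (M u u - M v u))
      = (∑ u, ∑ v, d u v * (M u u - M v u)) + ∑ u, ∑ v, d u v * (M v v - M u v) := by
    rw [← hswap]; ring
  rw [h2, ← Finset.sum_add_distrib]
  refine Finset.sum_congr rfl fun u _ => ?_
  rw [← Finset.sum_add_distrib]
  refine Finset.sum_congr rfl fun v _ => ?_
  rw [effRes_entries]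
  ring

lemma wLap_sub (w1 w2 : V → V → ℝ) :
    wLap (fun u v => w1 u v - w2 u v) = wLap w1 - wLap w2 := by
  ext i j
  by_cases h : i = j
  · subst h
    simp only [wLap, Matrix.sub_apply, Matrix.diagonal_apply_eq, Matrix.of_apply,
      Finset.sum_sub_distrib]
    ring
  · simp only [wLap, Matrix.sub_apply, Matrix.diagonal_apply_ne _ h, Matrix.of_apply]
    ring

/-- On a connected support graph, a vector with zero Laplacian energy is constant. -/
lemma constant_of_energy_zero {w : V → V → ℝ} (hw : IsWeight w)
    (hconn : (supportGraph w).Connected) {x : V → ℝ}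
    (hx : x ⬝ᵥ wLap w *ᵥ x = 0) : ∀ u v, x u = x v := by
  have hsum : (∑ u, ∑ v, w u v * (x u - x v) ^ 2) = 0 := by
    rw [← wLap_quadForm hw.symm, hx, mul_zero]
  have hterm : ∀ u v, w u v * (x u - x v) ^ 2 = 0 := by
    have h1 := (Finset.sum_eq_zero_iff_of_nonneg (fun u _ =>
      Finset.sum_nonneg fun v _ => mul_nonneg (hw.nonneg u v) (sq_nonneg _))).mp hsum
    intro u v
    exact (Finset.sum_eq_zero_iff_of_nonneg (fun v _ =>
      mul_nonneg (hw.nonneg u v) (sq_nonneg _))).mp (h1 u (Finset.mem_univ u)) v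
      (Finset.mem_univ v)
  have hadj : ∀ u v : V, (supportGraph w).Adj u v → x u = x v := by
    intro u v huv
    rw [supportGraph, SimpleGraph.fromRel_adj] at huv
    obtain ⟨-, h⟩ := huv
    have hwuv : w u v ≠ 0 := by
      rcases h with h | h
      · exact h
      · rw [hw.symm]; exact h
    have := hterm u v
    have hsq : (x u - x v) ^ 2 = 0 := by
      rcases mul_eq_zero.mp this with h' | h'
      · exact absurd h' hwuv
      · exact h'
    have := pow_eq_zero_iff (n := 2) (by norm_num) |>.mp hsq
    linarith [sub_eq_zero.mp this]
  suffices H : ∀ (a b : V) (_ : (supportGraph w).Walk a b), x a = x b by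
    intro u v
    obtain ⟨p⟩ := hconn.preconnected u v
    exact H u v p
  intro a b p
  induction p with
  | nil => rfl
  | cons h p ih => exact (hadj _ _ h).trans ih

/-- The regularized Laplacian is positive definite. -/
lemma posDef_reg {w : V → V → ℝ} (hw : IsWeight w)
    (hconn : (supportGraph w).Connected) :
    (wLap w + ((Fintype.card V : ℝ))⁻¹ • Jmat V).PosDef := by
  have : Nonempty V := hconn.nonempty
  have hcard : (0 : ℝ) < (Fintype.card V : ℝ) := by
    exact_mod_cast Fintype.card_pos
  refine Matrix.PosDef.of_dotProduct_mulVec_pos ?_ ?_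
  · show _ = _
    rw [Matrix.conjTranspose_eq_transpose_of_trivial, Matrix.transpose_add,
      Matrix.transpose_smul, wLap_transpose_s17 hw.symm]
    rfl
  · intro x hx
    have hstar : star x = x := by
      funext i; simp
    rw [hstar]
    have hJ : x ⬝ᵥ (Jmat V *ᵥ x) = (∑ u, x u) ^ 2 := by
      simp only [Jmat, Matrix.mulVec, dotProduct, Matrix.of_apply, one_mul]
      rw [sq, Finset.sum_mul]
    have hquad : 0 ≤ x ⬝ᵥ wLap w *ᵥ x := by
      have h2 := wLap_quadForm hw.symm x
      have : 0 ≤ ∑ u, ∑ v, w u v * (x u - x v) ^ 2 :=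
        Finset.sum_nonneg fun u _ => Finset.sum_nonneg fun v _ =>
          mul_nonneg (hw.nonneg u v) (sq_nonneg _)
      linarith
    rw [Matrix.add_mulVec, dotProduct_add, Matrix.smul_mulVec,
      dotProduct_smul, hJ]
    rcases eq_or_lt_of_le hquad with hq0 | hqpos
    · -- energy zero: x is constant and nonzero, so the sum is nonzero
      have hconst := constant_of_energy_zero hw hconn hq0.symm
      obtain ⟨v0⟩ := ‹Nonempty V›
      have hxv0 : x v0 ≠ 0 := by
        intro h0
        apply hx
        funext u
        rw [hconst u v0, h0]; rfl
      have hsum : (∑ u, x u) = (Fintype.card V : ℝ) * x v0 := by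
        rw [Finset.sum_congr rfl fun u _ => hconst u v0]
        simp [Finset.card_univ, mul_comm]
      rw [← hq0, hsum]
      have : (0:ℝ) < ((Fintype.card V : ℝ) * x v0) ^ 2 := by
        positivity
      positivity
    · have : 0 ≤ ((Fintype.card V : ℝ))⁻¹ • (∑ u, x u) ^ 2 := by positivity
      linarith

end Aux2
section Aux3

variable {V : Type*} [Fintype V] [DecidableEq V]

/-- The inverse of the regularized Laplacian is the pseudoinverse plus the regularizer. -/
lemma inv_reg {w : V → V → ℝ} (hw : IsWeight w)
    (hconn : (supportGraph w).Connected) {Lp : Matrix V V ℝ}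
    (hLp : IsMoorePenrose (wLap w) Lp) :
    (wLap w + ((Fintype.card V : ℝ))⁻¹ • Jmat V)⁻¹
      = Lp + ((Fintype.card V : ℝ))⁻¹ • Jmat V := by
  have : Nonempty V := hconn.nonempty
  have hcard : (0 : ℝ) < (Fintype.card V : ℝ) := by exact_mod_cast Fintype.card_pos
  set c : ℝ := ((Fintype.card V : ℝ))⁻¹ with hc
  set L : Matrix V V ℝ := wLap w with hL
  set A : Matrix V V ℝ := L + c • Jmat V with hA
  obtain ⟨h1, h2, h3, h4⟩ := hLp
  have hApd : A.PosDef := posDef_reg hw hconn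
  have hdet : IsUnit A.det := hApd.det_pos.ne'.isUnit
  have hLt : Lᵀ = L := wLap_transpose_s17 hw.symm
  have hLJ : L * Jmat V = 0 := wLap_mul_Jmat w
  have hJL : Jmat V * L = 0 := Jmat_mul_wLap hw.symm
  have hccn : c * (Fintype.card V : ℝ) = 1 := inv_mul_cancel₀ hcard.ne'
  -- L * Lp * Jmat = 0
  have ha : L * Lp * Jmat V = 0 := by
    rw [← h3, Matrix.transpose_mul, hLt, Matrix.mul_assoc, hLJ, Matrix.mul_zero]
  -- Jmat * Lp = 0
  have hb : Jmat V * Lp = 0 := by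
    have hLpL : Lp * L = L * Lpᵀ := by
      rw [← h4, Matrix.transpose_mul, hLt]
    calc Jmat V * Lp = Jmat V * (Lp * L * Lp) := by rw [h2]
      _ = Jmat V * (Lp * L) * Lp := by simp only [Matrix.mul_assoc]
      _ = Jmat V * (L * Lpᵀ) * Lp := by rw [hLpL]
      _ = (Jmat V * L) * Lpᵀ * Lp := by simp only [Matrix.mul_assoc]
      _ = 0 := by rw [hJL, Matrix.zero_mul, Matrix.zero_mul]
  -- L * Lp = 1 - c • Jmat
  have hP : L * Lp = 1 - c • Jmat V := by
    have hPA : (L * Lp) * A = (1 - c • Jmat V) * A := by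
      have lhs : (L * Lp) * A = L := by
        rw [hA, Matrix.mul_add, h1, Matrix.mul_smul, ha, smul_zero, add_zero]
      have rhs : (1 - c • Jmat V) * A = L := by
        rw [Matrix.sub_mul, Matrix.one_mul, Matrix.smul_mul, hA, Matrix.mul_add,
          hJL, Matrix.mul_smul, Jmat_mul_Jmat, zero_add]
        rw [smul_smul, smul_smul, mul_assoc, hccn, mul_one]
        simp
      rw [lhs, rhs]
    calc L * Lp = (L * Lp) * (A * A⁻¹) := by rw [Matrix.mul_nonsing_inv A hdet, Matrix.mul_one]
      _ = ((L * Lp) * A) * A⁻¹ := by simp only [Matrix.mul_assoc]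
      _ = ((1 - c • Jmat V) * A) * A⁻¹ := by rw [hPA]
      _ = (1 - c • Jmat V) * (A * A⁻¹) := by simp only [Matrix.mul_assoc]
      _ = 1 - c • Jmat V := by rw [Matrix.mul_nonsing_inv A hdet, Matrix.mul_one]
  -- right inverse
  apply Matrix.inv_eq_right_inv
  rw [hA, Matrix.add_mul, Matrix.mul_add, Matrix.mul_add, hP, Matrix.mul_smul,
    hLJ, smul_zero, add_zero, Matrix.smul_mul, Matrix.smul_mul, hb, smul_zero,
    Matrix.mul_smul, Jmat_mul_Jmat, zero_add, smul_smul, smul_smul,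
    mul_assoc, hccn, mul_one]
  simp

end Aux3
/-- Uniqueness of graph completion from effective resistances: if `I ⊔ J` partitions the
unordered pairs of distinct vertices, and two connected weighted graphs agree on edge
weights for all pairs in `I` and on effective resistances for all pairs in `J`, then the
graphs are equal. -/
theorem graph_completion_unique {n : ℕ} (I J : Set (Sym2 (Fin n)))
    (hdisj : Disjoint I J) (hcover : I ∪ J = {e : Sym2 (Fin n) | ¬ e.IsDiag})
    (wG wH : Fin n → Fin n → ℝ) (hwG : IsWeight wG) (hwH : IsWeight wH)
    (hGconn : (supportGraph wG).Connected) (hHconn : (supportGraph wH).Connected)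
    (LpG LpH : Matrix (Fin n) (Fin n) ℝ)
    (hLpG : IsMoorePenrose (wLap wG) LpG) (hLpH : IsMoorePenrose (wLap wH) LpH)
    (hI : ∀ i j : Fin n, s(i, j) ∈ I → wG i j = wH i j)
    (hJ : ∀ i j : Fin n, s(i, j) ∈ J → effRes LpG i j = effRes LpH i j) :
    wG = wH := by
  set c : ℝ := ((Fintype.card (Fin n) : ℝ))⁻¹ with hc
  set A : Matrix (Fin n) (Fin n) ℝ := wLap wG + c • Jmat (Fin n) with hA
  set B : Matrix (Fin n) (Fin n) ℝ := wLap wH + c • Jmat (Fin n) with hB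
  have hApd : A.PosDef := posDef_reg hwG hGconn
  have hBpd : B.PosDef := posDef_reg hwH hHconn
  have hAdet : IsUnit A.det := hApd.det_pos.ne'.isUnit
  have hBdet : IsUnit B.det := hBpd.det_pos.ne'.isUnit
  have hAinv : A⁻¹ = LpG + c • Jmat (Fin n) := inv_reg hwG hGconn hLpG
  have hBinv : B⁻¹ = LpH + c • Jmat (Fin n) := inv_reg hwH hHconn hLpH
  set d : Fin n → Fin n → ℝ := fun u v => wH u v - wG u v with hd
  have hdsymm : ∀ u v, d u v = d v u := fun u v => by
    simp only [hd, hwG.symm u v, hwH.symm u v]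
  set D : Matrix (Fin n) (Fin n) ℝ := wLap d with hD
  have hDBA : D = B - A := by
    rw [hD, hd, wLap_sub, hA, hB]
    abel
  have hDt : Dᵀ = D := wLap_transpose_s17 hdsymm
  -- trace equality from the hypotheses
  have htr_eq : Matrix.trace (A⁻¹ * D) = Matrix.trace (B⁻¹ * D) := by
    have hterm : ∀ u v : Fin n, d u v * effRes A⁻¹ u v = d u v * effRes B⁻¹ u v := by
      intro u v
      by_cases huv : u = v
      · subst huv
        simp [hd, hwG.loopless, hwH.loopless]
      · have hmem : s(u, v) ∈ I ∪ J := by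
          rw [hcover]
          simpa using huv
        rcases hmem with hmi | hmj
        · have : d u v = 0 := by
            simp [hd, hI u v hmi]
          rw [this, zero_mul, zero_mul]
        · have heA : effRes A⁻¹ u v = effRes LpG u v := by
            rw [hAinv, effRes_add_smul_Jmat]
          have heB : effRes B⁻¹ u v = effRes LpH u v := by
            rw [hBinv, effRes_add_smul_Jmat]
          rw [heA, heB, hJ u v hmj]
    have h2 : 2 * Matrix.trace (A⁻¹ * D) = 2 * Matrix.trace (B⁻¹ * D) := by
      rw [hD, two_trace_mul_wLap _ hdsymm, two_trace_mul_wLap _ hdsymm]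
      exact Finset.sum_congr rfl fun u _ => Finset.sum_congr rfl fun v _ => hterm u v
    linarith
  -- the key trace identity
  have hdiffinv : A⁻¹ - B⁻¹ = A⁻¹ * D * B⁻¹ := by
    have : A⁻¹ * (B - A) * B⁻¹ = A⁻¹ - B⁻¹ := by
      calc A⁻¹ * (B - A) * B⁻¹ = (A⁻¹ * B - 1) * B⁻¹ := by
            rw [Matrix.mul_sub, Matrix.nonsing_inv_mul A hAdet]
        _ = A⁻¹ * (B * B⁻¹) - B⁻¹ := by
            rw [Matrix.sub_mul, Matrix.one_mul, Matrix.mul_assoc]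
        _ = A⁻¹ - B⁻¹ := by rw [Matrix.mul_nonsing_inv B hBdet, Matrix.mul_one]
    rw [← this, hDBA]
  have htr0 : Matrix.trace (A⁻¹ * D * B⁻¹ * D) = 0 := by
    have hsplit : A⁻¹ * D * B⁻¹ * D = (A⁻¹ - B⁻¹) * D := by rw [hdiffinv]
    rw [hsplit, Matrix.sub_mul, Matrix.trace_sub, htr_eq, sub_self]
  -- sum of squares argument
  have hAipd : (A⁻¹).PosDef := hApd.inv
  have hBipd : (B⁻¹).PosDef := hBpd.inv
  set S : Matrix (Fin n) (Fin n) ℝ := CFC.sqrt (A⁻¹) with hS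
  set T : Matrix (Fin n) (Fin n) ℝ := CFC.sqrt (B⁻¹) with hT
  have hSS : S * S = A⁻¹ := CFC.sqrt_mul_sqrt_self (A⁻¹) hAipd.posSemidef.nonneg
  have hTT : T * T = B⁻¹ := CFC.sqrt_mul_sqrt_self (B⁻¹) hBipd.posSemidef.nonneg
  have hSt : Sᵀ = S := by
    have := (CFC.sqrt_nonneg (A⁻¹)).posSemidef.1
    rwa [Matrix.IsHermitian, Matrix.conjTranspose_eq_transpose_of_trivial] at this
  have hTt : Tᵀ = T := by
    have := (CFC.sqrt_nonneg (B⁻¹)).posSemidef.1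
    rwa [Matrix.IsHermitian, Matrix.conjTranspose_eq_transpose_of_trivial] at this
  set N : Matrix (Fin n) (Fin n) ℝ := S * D * T with hN
  have hNt : Nᵀ = T * (D * S) := by
    rw [hN, Matrix.transpose_mul, Matrix.transpose_mul, hSt, hTt, hDt]
  have htrN : Matrix.trace (N * Nᵀ) = 0 := by
    have e1 : N * Nᵀ = S * (D * (T * (T * (D * S)))) := by
      rw [hNt, hN]; simp only [Matrix.mul_assoc]
    have e2 : A⁻¹ * D * B⁻¹ * D = S * (S * (D * (T * (T * D)))) := by
      rw [← hSS, ← hTT]; simp only [Matrix.mul_assoc]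
    rw [← htr0, e1, e2]
    conv_rhs => rw [Matrix.trace_mul_comm]
    refine congrArg Matrix.trace ?_
    simp only [Matrix.mul_assoc]
  have hsq : (∑ i, ∑ j, (N i j) ^ 2) = 0 := by
    have : Matrix.trace (N * Nᵀ) = ∑ i, ∑ j, (N i j) ^ 2 := by
      simp [Matrix.trace, Matrix.diag, Matrix.mul_apply, sq]
    rw [← this, htrN]
  have hN0 : N = 0 := by
    ext i j
    have h1 := (Finset.sum_eq_zero_iff_of_nonneg (fun i _ =>
      Finset.sum_nonneg fun j _ => sq_nonneg (N i j))).mp hsq i (Finset.mem_univ i)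
    have h2 := (Finset.sum_eq_zero_iff_of_nonneg (fun j _ =>
      sq_nonneg (N i j))).mp h1 j (Finset.mem_univ j)
    simpa using (pow_eq_zero_iff (two_ne_zero)).mp h2
  have h5 : S * D * B⁻¹ = 0 := by
    calc S * D * B⁻¹ = S * D * (T * T) := by rw [hTT]
      _ = (S * D * T) * T := by simp only [Matrix.mul_assoc]
      _ = 0 := by rw [← hN, hN0, Matrix.zero_mul]
  have h6 : S * D = 0 := by
    calc S * D = S * D * (B⁻¹ * B) := by rw [Matrix.nonsing_inv_mul B hBdet, Matrix.mul_one]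
      _ = (S * D * B⁻¹) * B := by simp only [Matrix.mul_assoc]
      _ = 0 := by rw [h5, Matrix.zero_mul]
  have h7 : A⁻¹ * D = 0 := by
    calc A⁻¹ * D = (S * S) * D := by rw [hSS]
      _ = S * (S * D) := by simp only [Matrix.mul_assoc]
      _ = 0 := by rw [h6, Matrix.mul_zero]
  have hD0 : D = 0 := by
    calc D = (A * A⁻¹) * D := by rw [Matrix.mul_nonsing_inv A hAdet, Matrix.one_mul]
      _ = A * (A⁻¹ * D) := by simp only [Matrix.mul_assoc]
      _ = 0 := by rw [h7, Matrix.mul_zero]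
  -- conclude equality of weights
  funext u v
  by_cases huv : u = v
  · subst huv
    rw [hwG.loopless, hwH.loopless]
  · have hent : D u v = 0 := by rw [hD0]; rfl
    have : (0 : ℝ) - d u v = 0 := by
      rw [hD, wLap] at hent
      simpa [Matrix.sub_apply, Matrix.diagonal_apply_ne _ huv] using hent
    have : d u v = 0 := by linarith
    rw [hd] at this
    simp only at this
    linarith
end
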